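/- Let Ê be the 7×7 matrix obtained as diag(γ_1,...,γ_7)·E for the branched dissipativity matrix E; i.e., Ê has all diagonal entries -1 and off-diagonal entries ±γ_l placed as in E. Then the characteristic polynomial of Ê equals (s+1)^3 [(s+1)^4 + k], where k = γ_1γ_2γ_3γ_4 + γ_1γ_5γ_6γ_7. -/

import Mathlib

open Matrix Polynomial

@[simp] private lemma cons_val_five' {α : Type*} {m : ℕ} (x : α)
    (u : Fin m.succ.succ.succ.succ.succ → α) :
    Matrix.vecCons x u 5 =
      Matrix.vecHead (Matrix.vecTail (Matrix.vecTail (Matrix.vecTail (Matrix.vecTail u)))) := rfl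

@[simp] private lemma cons_val_six' {α : Type*} {m : ℕ} (x : α)
    (u : Fin m.succ.succ.succ.succ.succ.succ → α) :
    Matrix.vecCons x u 6 =
      Matrix.vecHead (Matrix.vecTail (Matrix.vecTail (Matrix.vecTail
        (Matrix.vecTail (Matrix.vecTail u))))) := rfl

set_option maxRecDepth 8000 in
private lemma det6_mid (x b c d e f g : ℝ[X]) :
    det !![-b,x,0,0,0,0; 0,-c,x,0,0,0; 0,0,-d,0,0,0; -e,0,0,x,0,0; 0,0,0,-f,x,0; 0,0,0,0,-g,x]
      = -(b*c*d)*x^3 := by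
  simp [Matrix.det_succ_row_zero, Fin.sum_univ_succ, Fin.succAbove]
  all_goals ring

set_option maxRecDepth 8000 in
private lemma det6_last (x b c d e f g : ℝ[X]) :
    det !![-b,x,0,0,0,0; 0,-c,x,0,0,0; 0,0,-d,x,0,0; -e,0,0,0,x,0; 0,0,0,0,-f,x; 0,0,0,0,0,-g]
      = e*f*g*x^3 := by
  simp [Matrix.det_succ_row_zero, Fin.sum_univ_succ, Fin.succAbove]
  all_goals ring

set_option maxRecDepth 8000 in
private lemma det6_first (x c d f g : ℝ[X]) :
    det !![x,0,0,0,0,0; -c,x,0,0,0,0; 0,-d,x,0,0,0; 0,0,0,x,0,0; 0,0,0,-f,x,0; 0,0,0,0,-g,x]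
      = x^6 := by
  simp [Matrix.det_succ_row_zero, Fin.sum_univ_succ, Fin.succAbove]
  all_goals ring

set_option maxRecDepth 8000 in
private lemma det7_key (x a b c d e f g : ℝ[X]) :
    det !![x, 0, 0, a, 0, 0, a;
           -b, x, 0, 0, 0, 0, 0;
           0, -c, x, 0, 0, 0, 0;
           0, 0, -d, x, 0, 0, 0;
           -e, 0, 0, 0, x, 0, 0;
           0, 0, 0, 0, -f, x, 0;
           0, 0, 0, 0, 0, -g, x] = x^7 + (b*c*d + e*f*g) * a * x^3 := by
  have s0 : (!![x, 0, 0, a, 0, 0, a;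
           -b, x, 0, 0, 0, 0, 0;
           0, -c, x, 0, 0, 0, 0;
           0, 0, -d, x, 0, 0, 0;
           -e, 0, 0, 0, x, 0, 0;
           0, 0, 0, 0, -f, x, 0;
           0, 0, 0, 0, 0, -g, x] : Matrix (Fin 7) (Fin 7) ℝ[X]).submatrix
        Fin.succ (Fin.succAbove 0) =
      !![x,0,0,0,0,0; -c,x,0,0,0,0; 0,-d,x,0,0,0; 0,0,0,x,0,0; 0,0,0,-f,x,0; 0,0,0,0,-g,x] := by
    ext i j; fin_cases i <;> fin_cases j <;> rfl
  have s3 : (!![x, 0, 0, a, 0, 0, a;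
           -b, x, 0, 0, 0, 0, 0;
           0, -c, x, 0, 0, 0, 0;
           0, 0, -d, x, 0, 0, 0;
           -e, 0, 0, 0, x, 0, 0;
           0, 0, 0, 0, -f, x, 0;
           0, 0, 0, 0, 0, -g, x] : Matrix (Fin 7) (Fin 7) ℝ[X]).submatrix
        Fin.succ (Fin.succAbove ((Fin.succ 0).succ.succ)) =
      !![-b,x,0,0,0,0; 0,-c,x,0,0,0; 0,0,-d,0,0,0; -e,0,0,x,0,0; 0,0,0,-f,x,0; 0,0,0,0,-g,x] := by
    ext i j; fin_cases i <;> fin_cases j <;> rfl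
  have s6 : (!![x, 0, 0, a, 0, 0, a;
           -b, x, 0, 0, 0, 0, 0;
           0, -c, x, 0, 0, 0, 0;
           0, 0, -d, x, 0, 0, 0;
           -e, 0, 0, 0, x, 0, 0;
           0, 0, 0, 0, -f, x, 0;
           0, 0, 0, 0, 0, -g, x] : Matrix (Fin 7) (Fin 7) ℝ[X]).submatrix
        Fin.succ (Fin.succAbove ((Fin.succ 0).succ.succ.succ.succ.succ)) =
      !![-b,x,0,0,0,0; 0,-c,x,0,0,0; 0,0,-d,x,0,0; -e,0,0,0,x,0; 0,0,0,0,-f,x; 0,0,0,0,0,-g] := by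
    ext i j; fin_cases i <;> fin_cases j <;> rfl
  rw [Matrix.det_succ_row_zero]
  simp only [Fin.sum_univ_succ, Fin.sum_univ_zero, Matrix.cons_val', Matrix.cons_val_zero,
    Matrix.cons_val_succ, Matrix.empty_val', Matrix.cons_val_fin_one, Matrix.of_apply,
    Fin.val_zero, Fin.val_succ, pow_zero, pow_succ, one_smul, zero_mul, mul_zero,
    add_zero, zero_add, neg_mul, one_mul, mul_one, neg_neg, smul_eq_mul, mul_neg]
  rw [s0, s3, s6, det6_first, det6_mid x b c d e f g, det6_last x b c d e f g]
  ring

/-- Dissipativity matrix of the branched feedback-inhibition network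
(indices 0..6 correspond to links 1..7). -/
noncomputable def branchedE (γ : Fin 7 → ℝ) : Matrix (Fin 7) (Fin 7) ℝ :=
  !![-(γ 0)⁻¹, 0, 0, -1, 0, 0, -1;
     1, -(γ 1)⁻¹, 0, 0, 0, 0, 0;
     0, 1, -(γ 2)⁻¹, 0, 0, 0, 0;
     0, 0, 1, -(γ 3)⁻¹, 0, 0, 0;
     1, 0, 0, 0, -(γ 4)⁻¹, 0, 0;
     0, 0, 0, 0, 1, -(γ 5)⁻¹, 0;
     0, 0, 0, 0, 0, 1, -(γ 6)⁻¹]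

set_option maxHeartbeats 1000000 in
set_option maxRecDepth 8000 in
theorem branched_hatE_charpoly (γ : Fin 7 → ℝ) (hγ : ∀ i, 0 < γ i) :
    (Matrix.diagonal γ * branchedE γ).charpoly =
      (X + 1) ^ 3 * ((X + 1) ^ 4 +
        C (γ 0 * γ 1 * γ 2 * γ 3 + γ 0 * γ 4 * γ 5 * γ 6)) := by
  have h : ∀ i, γ i * (γ i)⁻¹ = 1 := fun i => mul_inv_cancel₀ (hγ i).ne'
  have hM : charmatrix (Matrix.diagonal γ * branchedE γ) =
      !![X + 1, 0, 0, C (γ 0), 0, 0, C (γ 0);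
         -C (γ 1), X + 1, 0, 0, 0, 0, 0;
         0, -C (γ 2), X + 1, 0, 0, 0, 0;
         0, 0, -C (γ 3), X + 1, 0, 0, 0;
         -C (γ 4), 0, 0, 0, X + 1, 0, 0;
         0, 0, 0, 0, -C (γ 5), X + 1, 0;
         0, 0, 0, 0, 0, -C (γ 6), X + 1] := by
    apply Matrix.ext
    intro i j
    fin_cases i <;> fin_cases j <;>
      simp [charmatrix_apply, branchedE, Matrix.diagonal_mul, Matrix.one_apply, h,
        Matrix.vecHead, Matrix.vecTail]
  rw [Matrix.charpoly, hM, det7_key]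
  simp only [_root_.map_add, _root_.map_mul]
  ring
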